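/- (The doubling-degeneracy machine construction saturates the Landauer limit.) For θ > 0 and integers N > θ, set ε := θ/N, r := (1−ε)/2, Z_N := (∑_{n=0}^{N} 2^n r^n) + r^N, and λ_n := r^n/Z_N for 0 ≤ n ≤ N. Define the dissipated heat Q_N := log(2/(1−ε)) · ∑_{n=1}^{N} n · 2^n · ((λ_{n−1} + λ_N)/2 − λ_n). Then lim_{N→∞} Q_N = log 2. -/

import Mathlib

open Filter

/-- Gibbs ratio `r = (1−ε)/2` with `ε = θ/N`. -/
noncomputable def gibbsRatio (θ : ℝ) (N : ℕ) : ℝ := (1 - θ / N) / 2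

/-- Partition function `Z_N = (∑_{n=0}^N 2^n r^n) + r^N` of the doubling-degeneracy machine. -/
noncomputable def ZN (θ : ℝ) (N : ℕ) : ℝ :=
  (∑ m ∈ Finset.range (N + 1), (2 : ℝ) ^ m * gibbsRatio θ N ^ m) + gibbsRatio θ N ^ N

/-- Thermal population `λ_n = r^n / Z_N` of each level-`n` eigenstate. -/
noncomputable def lamN (θ : ℝ) (N n : ℕ) : ℝ := gibbsRatio θ N ^ n / ZN θ N

lemma sum_aux (y : ℝ) (N : ℕ) :
    (1 - y) ^ 2 * ∑ n ∈ Finset.range (N + 1), (n : ℝ) * y ^ n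
      = y - (N + 1) * y ^ (N + 1) + N * y ^ (N + 2) := by
  induction N with
  | zero => simp
  | succ M ih =>
    rw [Finset.sum_range_succ, mul_add]
    push_cast
    push_cast at ih
    linear_combination ih

lemma icc_sum_eq (f : ℕ → ℝ) (h0 : f 0 = 0) (N : ℕ) :
    ∑ n ∈ Finset.Icc 1 N, f n = ∑ n ∈ Finset.range (N + 1), f n := by
  apply Finset.sum_subset
  · intro n hn
    rw [Finset.mem_Icc] at hn
    rw [Finset.mem_range]
    omega
  · intro n hn hn'
    rw [Finset.mem_range] at hn
    rw [Finset.mem_Icc] at hn'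
    have : n = 0 := by omega
    simpa [this] using h0

noncomputable def uu (θ : ℝ) (N : ℕ) : ℝ := (1 - θ / N) ^ N
noncomputable def WW (θ : ℝ) (N : ℕ) : ℝ :=
  1 - (1 - θ / N) * uu θ N + (θ / N) * gibbsRatio θ N ^ N
noncomputable def numF (θ : ℝ) (N : ℕ) : ℝ :=
  1 - (1 + θ) * uu θ N + (θ - θ / N) * uu θ N + (θ / N) * gibbsRatio θ N ^ N

/-- The doubling-degeneracy machine construction saturates the Landauer
limit: the dissipated heat `Q_N` converges to `log 2` as `N → ∞`. -/
theorem doubling_degeneracy_landauer (θ : ℝ) (hθ : 0 < θ) :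
    Tendsto (fun N : ℕ =>
        Real.log (2 / (1 - θ / N)) *
          ∑ n ∈ Finset.Icc 1 N,
            (n : ℝ) * 2 ^ n * ((lamN θ N (n - 1) + lamN θ N N) / 2 - lamN θ N n))
      atTop (nhds (Real.log 2)) := by
  set E : ℝ := Real.exp (-θ) with hE
  have hE1 : E < 1 := by
    rw [hE]
    calc Real.exp (-θ) < Real.exp 0 := Real.exp_lt_exp.2 (by linarith)
    _ = 1 := Real.exp_zero
  have hEne : (1 : ℝ) - E ≠ 0 := by linarith
  -- basic limits
  have hdiv : Tendsto (fun N : ℕ => θ / (N : ℝ)) atTop (nhds 0) :=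
    tendsto_const_nhds.div_atTop tendsto_natCast_atTop_atTop
  have hxlim : Tendsto (fun N : ℕ => 1 - θ / (N : ℝ)) atTop (nhds 1) := by
    simpa using tendsto_const_nhds.sub hdiv
  have hu : Tendsto (fun N : ℕ => uu θ N) atTop (nhds E) := by
    have := Real.tendsto_one_add_div_pow_exp (-θ)
    refine this.congr fun N => ?_
    rw [uu]
    congr 1
    ring
  have hv : Tendsto (fun N : ℕ => gibbsRatio θ N ^ N) atTop (nhds 0) := by
    have h2 : Tendsto (fun N : ℕ => ((1 : ℝ) / 2) ^ N) atTop (nhds 0) :=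
      tendsto_pow_atTop_nhds_zero_of_lt_one (by norm_num) (by norm_num)
    have := hu.mul h2
    rw [mul_zero] at this
    refine this.congr fun N => ?_
    show uu θ N * (1 / 2) ^ N = gibbsRatio θ N ^ N
    rw [uu, gibbsRatio, ← mul_pow]
    congr 1
    ring
  have hW : Tendsto (fun N : ℕ => WW θ N) atTop (nhds (1 - E)) := by
    have : Tendsto (fun N : ℕ => 1 - (1 - θ / N) * uu θ N + (θ / N) * gibbsRatio θ N ^ N)
        atTop (nhds (1 - 1 * E + 0 * 0)) :=
      (tendsto_const_nhds.sub (hxlim.mul hu)).add (hdiv.mul hv)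
    simpa [WW] using this
  have hnum : Tendsto (fun N : ℕ => numF θ N) atTop (nhds (1 - E)) := by
    have : Tendsto (fun N : ℕ =>
        1 - (1 + θ) * uu θ N + (θ - θ / N) * uu θ N + (θ / N) * gibbsRatio θ N ^ N)
        atTop (nhds (1 - (1 + θ) * E + (θ - 0) * E + 0 * 0)) :=
      ((tendsto_const_nhds.sub (tendsto_const_nhds.mul hu)).add
        ((tendsto_const_nhds.sub hdiv).mul hu)).add (hdiv.mul hv)
    have heq : 1 - (1 + θ) * E + (θ - 0) * E + 0 * 0 = 1 - E := by ring
    rw [heq] at this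
    exact this.congr fun N => by rw [numF]
  have hlog : Tendsto (fun N : ℕ => Real.log (2 / (1 - θ / N))) atTop (nhds (Real.log 2)) := by
    have h2 : Tendsto (fun N : ℕ => 2 / (1 - θ / (N : ℝ))) atTop (nhds 2) := by
      have h3 : Tendsto (fun _ : ℕ => (2 : ℝ)) atTop (nhds 2) := tendsto_const_nhds
      have := h3.div hxlim one_ne_zero
      rw [div_one] at this
      exact this
    exact h2.log (by norm_num)
  -- the limit of the closed form
  have hmain : Tendsto (fun N : ℕ => Real.log (2 / (1 - θ / N)) * (numF θ N / WW θ N))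
      atTop (nhds (Real.log 2)) := by
    have := hlog.mul (hnum.div hW hEne)
    rwa [div_self hEne, mul_one] at this
  -- eventual equality of the sum with the closed form
  refine Tendsto.congr' ?_ hmain
  filter_upwards [eventually_gt_atTop ⌈θ⌉₊] with N hNθ
  have hθN : θ < (N : ℝ) := lt_of_le_of_lt (Nat.le_ceil θ) (by exact_mod_cast hNθ)
  have hNpos : (0 : ℝ) < N := by linarith
  have hNne : (N : ℝ) ≠ 0 := ne_of_gt hNpos
  have hxpos : 0 < 1 - θ / N := by
    rw [sub_pos, div_lt_one hNpos]; exact hθN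
  set r : ℝ := gibbsRatio θ N with hrdef
  have hr : 0 < r := by rw [hrdef, gibbsRatio]; linarith
  have h2r : 1 - θ / N = 2 * r := by rw [hrdef, gibbsRatio]; ring
  set ε : ℝ := θ / N with hεdef
  have hε : 0 < ε := by positivity
  have hεθ : ε * N = θ := by rw [hεdef]; exact div_mul_cancel₀ θ hNne
  have hε2r : ε = 1 - 2 * r := by linarith
  set Z : ℝ := ZN θ N with hZdef
  have hZ : 0 < Z := by
    rw [hZdef, ZN, ← hrdef]
    have h1 : (0:ℝ) < ∑ m ∈ Finset.range (N + 1), (2 : ℝ) ^ m * r ^ m := by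
      apply Finset.sum_pos
      · intro i _; positivity
      · exact ⟨0, by simp⟩
    positivity
  -- geometric sum gives W = ε * Z
  have hWZ : WW θ N = ε * Z := by
    have hg : (∑ m ∈ Finset.range (N + 1), (2 * r) ^ m) * (2 * r - 1) = (2 * r) ^ (N + 1) - 1 :=
      geom_sum_mul (2 * r) (N + 1)
    have hsum : ∑ m ∈ Finset.range (N + 1), (2 : ℝ) ^ m * r ^ m
        = ∑ m ∈ Finset.range (N + 1), (2 * r) ^ m := by
      refine Finset.sum_congr rfl fun m _ => (mul_pow 2 r m).symm
    rw [WW, uu, hZdef, ZN, ← hrdef, ← hεdef, hsum, h2r]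
    rw [hε2r]
    linear_combination hg
  -- closed forms of the two auxiliary sums
  set T : ℝ := ∑ n ∈ Finset.Icc 1 N, (n : ℝ) * (2 * r) ^ n with hTdef
  set T2 : ℝ := ∑ n ∈ Finset.Icc 1 N, (n : ℝ) * (2 : ℝ) ^ n with hT2def
  have hT : ε ^ 2 * T = 2 * r - (N + 1) * (2 * r) ^ (N + 1) + N * (2 * r) ^ (N + 2) := by
    have h1 : T = ∑ n ∈ Finset.range (N + 1), (n : ℝ) * (2 * r) ^ n := by
      rw [hTdef]; exact icc_sum_eq _ (by simp) N
    rw [h1, hε2r]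
    exact sum_aux (2 * r) N
  have hT2 : T2 = 2 - (N + 1) * 2 ^ (N + 1) + N * 2 ^ (N + 2) := by
    have h1 : T2 = ∑ n ∈ Finset.range (N + 1), (n : ℝ) * 2 ^ n := by
      rw [hT2def]; exact icc_sum_eq _ (by simp) N
    have := sum_aux 2 N
    rw [h1]
    linear_combination this
  -- rewrite the sum termwise
  have hterm : ∀ n ∈ Finset.Icc 1 N,
      (n : ℝ) * 2 ^ n * ((lamN θ N (n - 1) + lamN θ N N) / 2 - lamN θ N n)
        = (ε * ((n : ℝ) * (2 * r) ^ n) + r ^ (N + 1) * ((n : ℝ) * 2 ^ n)) / (2 * r * Z) := by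
    intro n hn
    simp only [Finset.mem_Icc] at hn
    obtain ⟨m, rfl⟩ : ∃ m, n = m + 1 := ⟨n - 1, by omega⟩
    simp only [lamN, ← hrdef, ← hZdef, Nat.add_sub_cancel]
    rw [hε2r]
    have hZne : Z ≠ 0 := ne_of_gt hZ
    have hrne : r ≠ 0 := ne_of_gt hr
    push_cast
    field_simp
    ring
  have hsum : (∑ n ∈ Finset.Icc 1 N,
      (n : ℝ) * 2 ^ n * ((lamN θ N (n - 1) + lamN θ N N) / 2 - lamN θ N n))
        = (ε * T + r ^ (N + 1) * T2) / (2 * r * Z) := by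
    rw [Finset.sum_congr rfl hterm, hTdef, hT2def, Finset.mul_sum, Finset.mul_sum,
      ← Finset.sum_add_distrib, ← Finset.sum_div]
  rw [hsum]
  congr 1
  -- final algebraic identity
  rw [hWZ, div_eq_div_iff (by positivity) (by positivity)]
  have hu2r : uu θ N = (2 * r) ^ N := by rw [uu, h2r]
  rw [numF, hu2r, ← hrdef, ← hεdef]
  have hθeq : θ = ε * N := hεθ.symm
  rw [hθeq, hε2r]
  rw [hε2r] at hT
  linear_combination (-Z) * hT - (Z * (1 - 2 * r) * r ^ (N + 1)) * hT2
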